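/- arXiv:1203.1871 — 4 statements merged into one kernel-verified Lean document; each statement's English description precedes it below -/
import Mathlib

section
/- Under the stability conditions ‖θ‖₁ < 1 and |ρ| < 1, the spectral radius of the companion matrix C_A of order p+1 (with first row (θ₁+ρ, θ₂−θ₁ρ, …, θ_p−θ_{p−1}ρ, −θ_p ρ) and ones on the subdiagonal) is strictly less than 1. -/
/-- under `‖θ‖₁ < 1` and `|ρ| < 1`, the spectral radius of the
companion matrix `C_A` is strictly less than 1. -/
theorem stmt5 (p : ℕ) (hp : 1 ≤ p) (θ : Fin p → ℝ) (ρ : ℝ)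
    (hθ : ∑ k, |θ k| < 1) (hρ : |ρ| < 1)
    (C : Matrix (Fin (p+1)) (Fin (p+1)) ℂ)
    (hC : ∀ i j : Fin (p+1), C i j =
      if i = 0 then
        (if (j : ℕ) = 0 then ((θ ⟨0, hp⟩ + ρ : ℝ) : ℂ)
         else if hj2 : (j : ℕ) < p then
           ((θ ⟨(j : ℕ), hj2⟩ - θ ⟨(j : ℕ) - 1, by omega⟩ * ρ : ℝ) : ℂ)
         else ((-(θ ⟨p - 1, by omega⟩ * ρ) : ℝ) : ℂ))
      else if (i : ℕ) = (j : ℕ) + 1 then 1 else 0) :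
    ∀ μ ∈ spectrum ℂ C, ‖μ‖ < 1 := by
  classical
  intro μ hμ
  by_contra habs
  push_neg at habs
  rw [spectrum.mem_iff] at hμ
  have hdet : (algebraMap ℂ (Matrix (Fin (p+1)) (Fin (p+1)) ℂ) μ - C).det = 0 := by
    by_contra hd
    exact hμ ((Matrix.isUnit_iff_isUnit_det _).mpr (isUnit_iff_ne_zero.mpr hd))
  obtain ⟨v, hv0, hv⟩ := Matrix.exists_mulVec_eq_zero_iff.mpr hdet
  have heig : C.mulVec v = μ • v := by
    have h := hv
    rw [Matrix.sub_mulVec, Algebra.algebraMap_eq_smul_one, Matrix.smul_mulVec,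
      Matrix.one_mulVec, sub_eq_zero] at h
    exact h.symm
  -- subdiagonal rows
  have hrow : ∀ m : ℕ, ∀ hm : m < p, v ⟨m, Nat.lt_succ_of_lt hm⟩
      = μ * v ⟨m+1, Nat.succ_lt_succ hm⟩ := by
    intro m hm
    have h1 : C.mulVec v ⟨m+1, Nat.succ_lt_succ hm⟩ = μ * v ⟨m+1, Nat.succ_lt_succ hm⟩ := by
      rw [heig]; rfl
    have h2 : C.mulVec v ⟨m+1, Nat.succ_lt_succ hm⟩ = v ⟨m, Nat.lt_succ_of_lt hm⟩ := by
      show (∑ j, C ⟨m+1, Nat.succ_lt_succ hm⟩ j * v j) = _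
      rw [Finset.sum_eq_single (⟨m, Nat.lt_succ_of_lt hm⟩ : Fin (p+1))]
      · rw [hC]; simp [Fin.ext_iff]
      · intro j _ hj
        rw [hC]
        have e0 : ¬ ((⟨m+1, Nat.succ_lt_succ hm⟩ : Fin (p+1)) = 0) := by simp [Fin.ext_iff]
        rw [if_neg e0]
        have e1 : ¬ ((m+1 : ℕ) = (j:ℕ)+1) := by
          intro h; exact hj (Fin.ext (show (j:ℕ) = m by omega))
        simp [e1]
        intro h; exact absurd (Fin.ext h.symm) hj
      · intro h; exact absurd (Finset.mem_univ _) h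
    rw [h2] at h1
    exact h1
  have hdesc : ∀ k : ℕ, k ≤ p →
      v ⟨p - k, Nat.lt_succ_of_le (Nat.sub_le p k)⟩
        = μ ^ k * v ⟨p, Nat.lt_succ_self p⟩ := by
    intro k
    induction k with
    | zero => intro _; simp
    | succ k ih =>
      intro hk
      have h1 := hrow (p - (k+1)) (by omega)
      have e : (⟨p - (k+1) + 1, by omega⟩ : Fin (p+1))
          = ⟨p - k, Nat.lt_succ_of_le (Nat.sub_le p k)⟩ := Fin.ext (by simp; omega)
      rw [e, ih (by omega)] at h1
      rw [h1, pow_succ]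
      ring
  have hval : ∀ j : Fin (p+1), v j = μ ^ (p - (j:ℕ)) * v ⟨p, Nat.lt_succ_self p⟩ := by
    intro j
    have hj := j.isLt
    have h1 := hdesc (p - (j:ℕ)) (by omega)
    have e : (⟨p - (p - (j:ℕ)), Nat.lt_succ_of_le (Nat.sub_le p (p - (j:ℕ)))⟩ : Fin (p+1)) = j :=
      Fin.ext (by simp; omega)
    rwa [e] at h1
  have hvp : v ⟨p, Nat.lt_succ_self p⟩ ≠ 0 :=
    fun h => hv0 (funext fun j => by rw [hval j, h, mul_zero]; rfl)
  -- first row coefficients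
  set t : ℕ → ℂ := fun n => if h : n < p then ((θ ⟨n, h⟩ : ℝ) : ℂ) else 0 with ht
  set s : ℕ → ℂ := fun n => if n = 0 then -1 else t (n-1) with hs
  have hC0 : ∀ j : Fin (p+1), C 0 j = t (j:ℕ) - (ρ:ℂ) * s (j:ℕ) := by
    intro j
    rw [hC, if_pos rfl]
    by_cases h0 : (j:ℕ) = 0
    · rw [if_pos h0]
      have e1 : t (j:ℕ) = ((θ ⟨0, hp⟩ : ℝ) : ℂ) := by
        simp [ht, h0, show 0 < p from hp]
      have e2 : s (j:ℕ) = -1 := by simp [hs, h0]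
      rw [e1, e2]
      push_cast; ring
    · rw [if_neg h0]
      by_cases h1 : (j:ℕ) < p
      · rw [dif_pos h1]
        have h2 : (j:ℕ) - 1 < p := by omega
        have e1 : t (j:ℕ) = ((θ ⟨(j:ℕ), h1⟩ : ℝ) : ℂ) := by simp [ht, h1]
        have e2 : s (j:ℕ) = ((θ ⟨(j:ℕ) - 1, h2⟩ : ℝ) : ℂ) := by simp [hs, ht, h0, h2]
        rw [e1, e2]
        push_cast; ring
      · rw [dif_neg h1]
        have hjp : (j:ℕ) = p := by have := j.isLt; omega
        have h2 : (j:ℕ) - 1 < p := by omega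
        have e1 : t (j:ℕ) = 0 := by simp [ht, h1]
        have e2 : s (j:ℕ) = ((θ ⟨p - 1, by omega⟩ : ℝ) : ℂ) := by
          have e3 : ((j:ℕ) - 1 : ℕ) = p - 1 := by omega
          simp [hs, ht, h0, e3, show p - 1 < p by omega]
        rw [e1, e2]
        push_cast; ring
  -- the characteristic equation
  have h0 : C.mulVec v 0 = μ * v 0 := by rw [heig]; rfl
  have hsum : (∑ j : Fin (p+1), (t (j:ℕ) - (ρ:ℂ) * s (j:ℕ)) * μ ^ (p - (j:ℕ)))
        * v ⟨p, Nat.lt_succ_self p⟩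
      = μ ^ (p+1) * v ⟨p, Nat.lt_succ_self p⟩ := by
    rw [Finset.sum_mul]
    have hmv : C.mulVec v 0 = ∑ j : Fin (p+1),
        (t (j:ℕ) - (ρ:ℂ) * s (j:ℕ)) * μ ^ (p - (j:ℕ)) * v ⟨p, Nat.lt_succ_self p⟩ := by
      show (∑ j, C 0 j * v j) = _
      refine Finset.sum_congr rfl fun j _ => ?_
      rw [hC0 j, hval j]; ring
    rw [← hmv, h0, hval 0]
    show μ * (μ ^ (p - 0) * _) = _
    rw [Nat.sub_zero, pow_succ]
    ring
  have key : (∑ j : Fin (p+1), (t (j:ℕ) - (ρ:ℂ) * s (j:ℕ)) * μ ^ (p - (j:ℕ))) = μ ^ (p+1) :=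
    mul_right_cancel₀ hvp hsum
  have key2 : (∑ j ∈ Finset.range (p+1), (t j - (ρ:ℂ) * s j) * μ ^ (p - j)) = μ ^ (p+1) := by
    rw [← key]
    exact (Fin.sum_univ_eq_sum_range (fun j => (t j - (ρ:ℂ) * s j) * μ ^ (p - j)) (p+1)).symm
  set S : ℂ := ∑ k ∈ Finset.range p, t k * μ ^ (p - 1 - k) with hSdef
  have hA : (∑ j ∈ Finset.range (p+1), t j * μ ^ (p - j)) = μ * S := by
    rw [Finset.sum_range_succ]
    have htp : t p = 0 := by simp [ht]
    rw [htp, zero_mul, add_zero, hSdef, Finset.mul_sum]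
    refine Finset.sum_congr rfl fun k hk => ?_
    rw [Finset.mem_range] at hk
    rw [show p - k = (p - 1 - k) + 1 from by omega, pow_succ]
    ring
  have hB : (∑ j ∈ Finset.range (p+1), s j * μ ^ (p - j)) = S - μ ^ p := by
    rw [Finset.sum_range_succ']
    have e0 : s 0 = -1 := by simp [hs]
    have e1 : (∑ i ∈ Finset.range p, s (i+1) * μ ^ (p - (i+1))) = S := by
      rw [hSdef]
      refine Finset.sum_congr rfl fun k hk => ?_
      rw [Finset.mem_range] at hk
      have e2 : s (k+1) = t k := by simp [hs]
      rw [e2, show p - (k+1) = p - 1 - k from by omega]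
    rw [e1, e0, Nat.sub_zero]
    ring
  have hsplit : (∑ j ∈ Finset.range (p+1), (t j - (ρ:ℂ) * s j) * μ ^ (p - j))
      = μ * S - (ρ:ℂ) * (S - μ ^ p) := by
    rw [← hA, ← hB, Finset.mul_sum, ← Finset.sum_sub_distrib]
    exact Finset.sum_congr rfl fun j _ => by ring
  rw [hsplit] at key2
  have hp1 : μ ^ (p+1) = μ ^ p * μ := pow_succ μ p
  have hfact : (μ - (ρ:ℂ)) * (μ ^ p - S) = 0 := by linear_combination -key2 - hp1
  rcases mul_eq_zero.mp hfact with h | h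
  · have hμρ : μ = (ρ:ℂ) := sub_eq_zero.mp h
    rw [hμρ, Complex.norm_real, Real.norm_eq_abs] at habs
    linarith
  · have hSμ : μ ^ p = S := sub_eq_zero.mp h
    set T : ℕ → ℝ := fun n => if h : n < p then |θ ⟨n, h⟩| else 0 with hT
    have hμpos : (0:ℝ) < ‖μ‖ := lt_of_lt_of_le one_pos habs
    have hbound : ‖S‖ ≤ (∑ k, |θ k|) * ‖μ‖ ^ (p-1) := by
      calc ‖S‖ ≤ ∑ k ∈ Finset.range p, ‖t k * μ ^ (p-1-k)‖ :=
            norm_sum_le _ _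
        _ ≤ ∑ k ∈ Finset.range p, T k * ‖μ‖ ^ (p-1) := by
            refine Finset.sum_le_sum fun k hk => ?_
            rw [Finset.mem_range] at hk
            rw [norm_mul, norm_pow]
            have e1 : ‖t k‖ = T k := by
              simp [ht, hT, hk]
            rw [e1]
            refine mul_le_mul_of_nonneg_left ?_ (e1 ▸ norm_nonneg (t k))
            exact pow_le_pow_right₀ habs (by omega)
        _ = (∑ k, |θ k|) * ‖μ‖ ^ (p-1) := by
            rw [← Finset.sum_mul]
            congr 1
            rw [← Fin.sum_univ_eq_sum_range (fun k => T k) p]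
            exact Finset.sum_congr rfl fun i _ => by simp [hT, i.isLt]
    have h2 : (∑ k, |θ k|) * ‖μ‖ ^ (p-1) < 1 * ‖μ‖ ^ (p-1) :=
      mul_lt_mul_of_pos_right hθ (pow_pos hμpos _)
    have h3 : ‖μ‖ ^ (p-1) ≤ ‖μ‖ ^ p :=
      pow_le_pow_right₀ habs (by omega)
    have h4 : ‖μ‖ ^ p = ‖S‖ := by rw [← hSμ, norm_pow]
    linarith
end

section
/- Let (V_n) be i.i.d. with E[|V₁|^a] < ∞ for some a ≥ 1, and let (X_n) satisfy the stable autoregressive system X_n = ∑_{k=1}^p θ_k X_{n−k} + ε_n, ε_n = ρε_{n−1} + V_n, with ‖θ‖₁ < 1 and |ρ| < 1 and square-integrable initial values. Then almost surely ∑_{k=0}^n |X_k|^a = O(n) and sup_{0≤k≤n} |X_k| = o(n^{1/a}). -/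
open MeasureTheory ProbabilityTheory Filter



noncomputable def cseq (p : ℕ) (θ : Fin p → ℝ) : ℕ → ℝ
  | 0 => 1
  | (m+1) => ∑ k : Fin p, if h : (k : ℕ) + 1 ≤ m + 1 then
      |θ k| * cseq p θ (m + 1 - ((k : ℕ) + 1)) else 0
  termination_by m => m
  decreasing_by omega

lemma cseq_nonneg (p : ℕ) (θ : Fin p → ℝ) : ∀ m, 0 ≤ cseq p θ m := by
  intro m
  induction m using Nat.strong_induction_on with
  | _ m ih =>
    match m with
    | 0 => simp [cseq]
    | (m+1) =>
      rw [cseq]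
      refine Finset.sum_nonneg fun k _ => ?_
      split
      · exact mul_nonneg (abs_nonneg _) (ih _ (by omega))
      · exact le_refl _

lemma cseq_sum_le (p : ℕ) (θ : Fin p → ℝ) (hθ : ∑ k, |θ k| < 1) (N : ℕ) :
    ∑ m ∈ Finset.range (N+1), cseq p θ m ≤ 1 / (1 - ∑ k, |θ k|) := by
  set s := ∑ k, |θ k| with hs
  have hs0 : 0 ≤ s := Finset.sum_nonneg fun k _ => abs_nonneg _
  have h1s : 0 < 1 - s := by linarith
  set S := ∑ m ∈ Finset.range (N+1), cseq p θ m with hS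
  have key : S ≤ 1 + s * S := by
    conv_lhs => rw [hS, Finset.sum_range_succ']
    have h1 : ∑ m ∈ Finset.range N, cseq p θ (m+1)
        = ∑ k : Fin p, ∑ m ∈ Finset.range N,
          (if (k : ℕ) + 1 ≤ m + 1 then |θ k| * cseq p θ (m + 1 - ((k : ℕ) + 1)) else 0) := by
      rw [Finset.sum_comm]
      refine Finset.sum_congr rfl fun m _ => ?_
      rw [cseq]
      refine Finset.sum_congr rfl fun k _ => ?_
      rw [dite_eq_ite]
    have h2 : ∀ k : Fin p, ∑ m ∈ Finset.range N,
          (if (k : ℕ) + 1 ≤ m + 1 then |θ k| * cseq p θ (m + 1 - ((k : ℕ) + 1)) else 0)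
        ≤ |θ k| * S := by
      intro k
      have e1 : ∀ m : ℕ, (if (k : ℕ) + 1 ≤ m + 1 then |θ k| * cseq p θ (m + 1 - ((k : ℕ) + 1)) else 0)
          = (if (k : ℕ) ≤ m then |θ k| * cseq p θ (m - (k : ℕ)) else 0) := by
        intro m
        by_cases h : (k : ℕ) ≤ m
        · rw [if_pos h, if_pos (by omega)]
          congr 2
          omega
        · rw [if_neg h, if_neg (by omega)]
      simp only [e1]
      rw [← Finset.sum_filter]
      have e2 : (Finset.range N).filter (fun m => (k : ℕ) ≤ m) = Finset.Ico (k : ℕ) N := by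
        rw [Finset.range_eq_Ico, Finset.Ico_filter_le]; simp
      rw [e2, Finset.sum_Ico_eq_sum_range]
      have e3 : ∀ i, |θ k| * cseq p θ ((k : ℕ) + i - (k : ℕ)) = |θ k| * cseq p θ i := by
        intro i; congr 2; omega
      simp only [e3]
      calc ∑ i ∈ Finset.range (N - (k:ℕ)), |θ k| * cseq p θ i
          ≤ ∑ i ∈ Finset.range (N+1), |θ k| * cseq p θ i :=
            Finset.sum_le_sum_of_subset_of_nonneg (Finset.range_subset_range.2 (by omega))
              (fun i _ _ => mul_nonneg (abs_nonneg _) (cseq_nonneg p θ i))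
        _ = |θ k| * S := by rw [hS, Finset.mul_sum]
    calc ∑ m ∈ Finset.range N, cseq p θ (m+1) + cseq p θ 0
        ≤ (∑ k : Fin p, |θ k| * S) + 1 := by
          rw [h1]
          have : cseq p θ 0 = 1 := by rw [cseq]
          rw [this]
          exact add_le_add_left (Finset.sum_le_sum fun k _ => h2 k) 1
      _ = 1 + s * S := by rw [hs, Finset.sum_mul]; ring
  rw [le_div_iff₀ h1s]
  nlinarith

lemma cseq_sum_le' (p : ℕ) (θ : Fin p → ℝ) (hθ : ∑ k, |θ k| < 1) (M : ℕ) :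
    ∑ m ∈ Finset.range M, cseq p θ m ≤ 1 / (1 - ∑ k, |θ k|) := by
  match M with
  | 0 =>
    simp only [Finset.range_zero, Finset.sum_empty]
    have h1 : (0:ℝ) < 1 - ∑ k, |θ k| := by
      have : (0:ℝ) ≤ ∑ k, |θ k| := Finset.sum_nonneg fun k _ => abs_nonneg _
      linarith
    positivity
  | (N+1) => exact cseq_sum_le p θ hθ N

lemma cseq_succ (p : ℕ) (θ : Fin p → ℝ) (n : ℕ) (hn : 1 ≤ n) :
    cseq p θ n = ∑ k : Fin p, if (k : ℕ) + 1 ≤ n then |θ k| * cseq p θ (n - ((k : ℕ) + 1)) else 0 := by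
  obtain ⟨m, rfl⟩ : ∃ m, n = m + 1 := ⟨n - 1, by omega⟩
  rw [cseq]
  exact Finset.sum_congr rfl fun k _ => by rw [dite_eq_ite]

lemma x_bound (p : ℕ) (θ : Fin p → ℝ) (x e : ℕ → ℝ)
    (h0 : x 0 = e 0)
    (hx : ∀ n, 1 ≤ n → x n =
      (∑ k : Fin p, if (k : ℕ) + 1 ≤ n then θ k * x (n - ((k : ℕ) + 1)) else 0) + e n) :
    ∀ n, |x n| ≤ ∑ j ∈ Finset.range (n+1), cseq p θ (n-j) * |e j| := by
  intro n
  induction n using Nat.strong_induction_on with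
  | _ n ih =>
    match n with
    | 0 => simp [h0, cseq]
    | (n+1) =>
      set N := n + 1 with hN
      -- key identity
      have key : ∑ j ∈ Finset.range (N+1), cseq p θ (N-j) * |e j|
          = (∑ k : Fin p, if (k : ℕ) + 1 ≤ N then
              |θ k| * ∑ j ∈ Finset.range (N - ((k:ℕ)+1) + 1), cseq p θ (N - ((k:ℕ)+1) - j) * |e j|
              else 0) + |e N| := by
        rw [Finset.sum_range_succ]
        have hNN : N - N = 0 := by omega
        rw [hNN]
        have hc0 : cseq p θ 0 = 1 := by rw [cseq]
        rw [hc0, one_mul]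
        congr 1
        have step1 : ∀ j ∈ Finset.range N, cseq p θ (N-j) * |e j|
            = ∑ k : Fin p, (if (k : ℕ) + 1 ≤ N - j then
                |θ k| * cseq p θ (N - j - ((k : ℕ) + 1)) else 0) * |e j| := by
          intro j hj
          rw [Finset.mem_range] at hj
          rw [cseq_succ p θ (N-j) (by omega), Finset.sum_mul]
        rw [Finset.sum_congr rfl step1, Finset.sum_comm]
        refine Finset.sum_congr rfl fun k _ => ?_
        by_cases hk : (k : ℕ) + 1 ≤ N
        · rw [if_pos hk, Finset.mul_sum]
          rw [← Finset.sum_subset (Finset.range_subset_range.2 (show N - ((k:ℕ)+1) + 1 ≤ N by omega))]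
          · refine Finset.sum_congr rfl fun j hj => ?_
            rw [Finset.mem_range] at hj
            rw [if_pos (by omega)]
            have : N - j - ((k:ℕ)+1) = N - ((k:ℕ)+1) - j := by omega
            rw [this]
            ring
          · intro j hj hj2
            rw [Finset.mem_range] at hj
            rw [Finset.mem_range] at hj2
            rw [if_neg (by omega), zero_mul]
        · rw [if_neg hk]
          refine Finset.sum_eq_zero fun j hj => ?_
          rw [Finset.mem_range] at hj
          rw [if_neg (by omega), zero_mul]
      rw [key, hx N (by omega)]
      refine (abs_add_le _ _).trans (add_le_add ?_ (le_refl _))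
      refine (Finset.abs_sum_le_sum_abs _ _).trans (Finset.sum_le_sum fun k _ => ?_)
      by_cases hk : (k : ℕ) + 1 ≤ N
      · rw [if_pos hk, if_pos hk, abs_mul]
        exact mul_le_mul_of_nonneg_left (ih _ (by omega)) (abs_nonneg _)
      · rw [if_neg hk, if_neg hk, abs_zero]

lemma eps_bound (ρ : ℝ) (e v : ℕ → ℝ) (he : ∀ n, 1 ≤ n → e n = ρ * e (n-1) + v n) :
    ∀ n, |e n| ≤ ∑ i ∈ Finset.range (n+1), |ρ|^(n-i) * (if i = 0 then |e 0| else |v i|) := by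
  set w : ℕ → ℝ := fun i => if i = 0 then |e 0| else |v i| with hw
  intro n
  induction n with
  | zero => simp [hw]
  | succ n ih =>
    rw [he (n+1) (by omega)]
    have h1 : |ρ * e n + v (n+1)| ≤ |ρ| * |e n| + w (n+1) := by
      refine (abs_add_le _ _).trans ?_
      rw [abs_mul, hw]
      simp
    refine h1.trans ?_
    rw [Finset.sum_range_succ]
    have h2 : ∀ i ∈ Finset.range (n+1), |ρ| * (|ρ|^(n-i) * w i) = |ρ|^(n+1-i) * w i := by
      intro i hi
      rw [Finset.mem_range] at hi
      have : n + 1 - i = (n - i) + 1 := by omega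
      rw [this, pow_succ]
      ring
    calc |ρ| * |e n| + w (n+1)
        ≤ |ρ| * (∑ i ∈ Finset.range (n+1), |ρ|^(n-i) * w i) + w (n+1) := by
          refine add_le_add_left (mul_le_mul_of_nonneg_left ih (abs_nonneg _)) _
      _ = (∑ i ∈ Finset.range (n+1), |ρ|^(n+1-i) * w i) + w (n+1) := by
          rw [Finset.mul_sum]
          rw [Finset.sum_congr rfl h2]
      _ = (∑ i ∈ Finset.range (n+1), |ρ|^(n+1-i) * w i) + |ρ|^(n+1-(n+1)) * w (n+1) := by
          simp

noncomputable def dseq (p : ℕ) (θ : Fin p → ℝ) (ρ : ℝ) (m : ℕ) : ℝ :=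
  ∑ t ∈ Finset.range (m+1), cseq p θ (m-t) * |ρ|^t

lemma dseq_nonneg (p : ℕ) (θ : Fin p → ℝ) (ρ : ℝ) (m : ℕ) : 0 ≤ dseq p θ ρ m :=
  Finset.sum_nonneg fun t _ => mul_nonneg (cseq_nonneg p θ _) (pow_nonneg (abs_nonneg _) _)

lemma geom_le'' (ρ : ℝ) (hρ : |ρ| < 1) (M : ℕ) :
    ∑ t ∈ Finset.range M, |ρ|^t ≤ 1 / (1 - |ρ|) := by
  have h1 : 0 < 1 - |ρ| := by linarith
  rw [geom_sum_eq (by intro h; rw [h] at hρ; linarith : |ρ| ≠ 1)]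
  have e : (|ρ|^M - 1)/(|ρ| - 1) = (1 - |ρ|^M)/(1 - |ρ|) := by
    rw [← neg_div_neg_eq]; ring_nf
  rw [e]
  have hnum : (1 - |ρ|^M) ≤ 1 := by
    have : (0:ℝ) ≤ |ρ|^M := pow_nonneg (abs_nonneg _) _
    linarith
  exact div_le_div_of_nonneg_right hnum h1.le |>.trans (le_refl _)

lemma dseq_sum_le (p : ℕ) (θ : Fin p → ℝ) (ρ : ℝ) (hθ : ∑ k, |θ k| < 1) (hρ : |ρ| < 1) (N : ℕ) :
    ∑ m ∈ Finset.range (N+1), dseq p θ ρ m ≤ (1 / (1 - ∑ k, |θ k|)) * (1 / (1 - |ρ|)) := by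
  have hs0 : (0:ℝ) ≤ 1 / (1 - ∑ k, |θ k|) := by
    have : (0:ℝ) < 1 - ∑ k, |θ k| := by
      have : (0:ℝ) ≤ ∑ k, |θ k| := Finset.sum_nonneg fun k _ => abs_nonneg _
      linarith
    positivity
  simp only [dseq]
  -- swap: ∑_{m ∈ range (N+1)} ∑_{t ∈ range (m+1)} c (m-t) r^t
  --     = ∑_{t ∈ range (N+1)} ∑_{m ∈ Ico t (N+1)} c (m-t) r^t
  rw [show (Finset.range (N+1)) = Finset.Ico 0 (N+1) by rw [Finset.range_eq_Ico]]
  have swap := Finset.sum_Ico_Ico_comm 0 (N+1) (fun t m => cseq p θ (m-t) * |ρ|^t)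
  have e1 : ∀ m ∈ Finset.Ico 0 (N+1), ∑ t ∈ Finset.range (m+1), cseq p θ (m-t) * |ρ|^t
      = ∑ t ∈ Finset.Ico 0 (m+1), cseq p θ (m-t) * |ρ|^t := by
    intro m _; rw [Finset.range_eq_Ico]
  rw [Finset.sum_congr rfl e1, ← swap]
  have e2 : ∀ t ∈ Finset.Ico 0 (N+1), ∑ m ∈ Finset.Ico t (N+1), cseq p θ (m-t) * |ρ|^t
      ≤ (1 / (1 - ∑ k, |θ k|)) * |ρ|^t := by
    intro t _
    rw [Finset.sum_Ico_eq_sum_range, ← Finset.sum_mul]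
    refine mul_le_mul_of_nonneg_right ?_ (pow_nonneg (abs_nonneg _) _)
    have e3 : ∀ i, cseq p θ (t + i - t) = cseq p θ i := fun i => by congr 1; omega
    rw [Finset.sum_congr rfl fun i _ => e3 i]
    exact cseq_sum_le' p θ hθ _
  calc ∑ t ∈ Finset.Ico 0 (N+1), ∑ m ∈ Finset.Ico t (N+1), cseq p θ (m-t) * |ρ|^t
      ≤ ∑ t ∈ Finset.Ico 0 (N+1), (1 / (1 - ∑ k, |θ k|)) * |ρ|^t := Finset.sum_le_sum e2
    _ ≤ (1 / (1 - ∑ k, |θ k|)) * (1 / (1 - |ρ|)) := by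
        rw [← Finset.mul_sum, ← Finset.range_eq_Ico]
        exact mul_le_mul_of_nonneg_left (geom_le'' ρ hρ _) hs0



lemma jensen_step (d w : ℕ → ℝ) (hd : ∀ i, 0 ≤ d i) (hw : ∀ i, 0 ≤ w i)
    (D a : ℝ) (ha : 1 ≤ a) (hD : 0 < D) (n : ℕ)
    (hsum : ∑ i ∈ Finset.range (n+1), d i ≤ D) :
    (∑ i ∈ Finset.range (n+1), d i * w i) ^ a
      ≤ D ^ (a-1) * ∑ i ∈ Finset.range (n+1), d i * w i ^ a := by
  have ha0 : a ≠ 0 := by linarith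
  have hRHSnn : 0 ≤ ∑ i ∈ Finset.range (n+1), d i * w i ^ a :=
    Finset.sum_nonneg fun i _ => mul_nonneg (hd i) (Real.rpow_nonneg (hw i) a)
  set T := ∑ i ∈ Finset.range (n+1), d i with hT
  have hTnn : 0 ≤ T := Finset.sum_nonneg fun i _ => hd i
  rcases eq_or_lt_of_le hTnn with h0 | hTpos
  · have hz : ∀ i ∈ Finset.range (n+1), d i = 0 :=
      (Finset.sum_eq_zero_iff_of_nonneg fun i _ => hd i).1 h0.symm
    have e1 : ∑ i ∈ Finset.range (n+1), d i * w i = 0 :=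
      Finset.sum_eq_zero fun i hi => by rw [hz i hi, zero_mul]
    rw [e1, Real.zero_rpow ha0]
    positivity
  · have key := Real.rpow_arith_mean_le_arith_mean_rpow (Finset.range (n+1))
      (fun i => d i / T) w (fun i _ => div_nonneg (hd i) hTnn)
      (by rw [← Finset.sum_div, ← hT, div_self hTpos.ne']) (fun i _ => hw i) ha
    have e2 : ∑ i ∈ Finset.range (n+1), d i / T * w i
        = (∑ i ∈ Finset.range (n+1), d i * w i) / T := by
      rw [Finset.sum_div]
      exact Finset.sum_congr rfl fun i _ => by ring
    have e3 : ∑ i ∈ Finset.range (n+1), d i / T * w i ^ a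
        = (∑ i ∈ Finset.range (n+1), d i * w i ^ a) / T := by
      rw [Finset.sum_div]
      exact Finset.sum_congr rfl fun i _ => by ring
    rw [e2, e3] at key
    have hnum : 0 ≤ ∑ i ∈ Finset.range (n+1), d i * w i :=
      Finset.sum_nonneg fun i _ => mul_nonneg (hd i) (hw i)
    have e4 : (∑ i ∈ Finset.range (n+1), d i * w i) ^ a
        = T ^ a * ((∑ i ∈ Finset.range (n+1), d i * w i)/T) ^ a := by
      rw [Real.div_rpow hnum hTnn]
      field_simp
    rw [e4]
    calc T ^ a * ((∑ i ∈ Finset.range (n+1), d i * w i)/T) ^ a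
        ≤ T ^ a * ((∑ i ∈ Finset.range (n+1), d i * w i ^ a)/T) :=
          mul_le_mul_of_nonneg_left key (Real.rpow_nonneg hTnn a)
      _ = T ^ (a-1) * ∑ i ∈ Finset.range (n+1), d i * w i ^ a := by
          rw [Real.rpow_sub hTpos, Real.rpow_one]; ring
      _ ≤ D ^ (a-1) * ∑ i ∈ Finset.range (n+1), d i * w i ^ a := by
          refine mul_le_mul_of_nonneg_right ?_ hRHSnn
          exact Real.rpow_le_rpow hTnn hsum (by linarith)

lemma dseq_sum_le' (p : ℕ) (θ : Fin p → ℝ) (ρ : ℝ) (hθ : ∑ k, |θ k| < 1) (hρ : |ρ| < 1) (M : ℕ) :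
    ∑ m ∈ Finset.range M, dseq p θ ρ m ≤ (1 / (1 - ∑ k, |θ k|)) * (1 / (1 - |ρ|)) := by
  match M with
  | 0 =>
    simp only [Finset.range_zero, Finset.sum_empty]
    have h1 : (0:ℝ) < 1 - ∑ k, |θ k| := by
      have : (0:ℝ) ≤ ∑ k, |θ k| := Finset.sum_nonneg fun k _ => abs_nonneg _
      linarith
    have h2 : (0:ℝ) < 1 - |ρ| := by linarith
    positivity
  | (N+1) => exact dseq_sum_le p θ ρ hθ hρ N

lemma dseq_shift_sum_le (p : ℕ) (θ : Fin p → ℝ) (ρ : ℝ) (hθ : ∑ k, |θ k| < 1) (hρ : |ρ| < 1)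
    (n : ℕ) : ∑ i ∈ Finset.range (n+1), dseq p θ ρ (n-i)
      ≤ (1 / (1 - ∑ k, |θ k|)) * (1 / (1 - |ρ|)) := by
  have e := Finset.sum_range_reflect (dseq p θ ρ) (n+1)
  simp only [Nat.add_sub_cancel] at e
  rw [e]
  exact dseq_sum_le' p θ ρ hθ hρ _

lemma xw_bound (p : ℕ) (θ : Fin p → ℝ) (ρ : ℝ) (x e v : ℕ → ℝ)
    (h0 : x 0 = e 0)
    (hx : ∀ n, 1 ≤ n → x n =
      (∑ k : Fin p, if (k : ℕ) + 1 ≤ n then θ k * x (n - ((k : ℕ) + 1)) else 0) + e n)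
    (he : ∀ n, 1 ≤ n → e n = ρ * e (n-1) + v n) :
    ∀ n, |x n| ≤ ∑ i ∈ Finset.range (n+1),
      dseq p θ ρ (n-i) * (if i = 0 then |e 0| else |v i|) := by
  intro n
  set w : ℕ → ℝ := fun i => if i = 0 then |e 0| else |v i| with hw
  have hwnn : ∀ i, 0 ≤ w i := by
    intro i; rw [hw]; dsimp only; split <;> exact abs_nonneg _
  refine (x_bound p θ x e h0 hx n).trans ?_
  have step1 : ∑ j ∈ Finset.range (n+1), cseq p θ (n-j) * |e j|
      ≤ ∑ j ∈ Finset.range (n+1), ∑ i ∈ Finset.range (j+1),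
          cseq p θ (n-j) * (|ρ|^(j-i) * w i) := by
    refine Finset.sum_le_sum fun j _ => ?_
    rw [← Finset.mul_sum]
    exact mul_le_mul_of_nonneg_left (eps_bound ρ e v he j) (cseq_nonneg p θ _)
  refine step1.trans ?_
  have swap := Finset.sum_Ico_Ico_comm 0 (n+1)
    (fun i j => cseq p θ (n-j) * (|ρ|^(j-i) * w i))
  have e1 : ∑ j ∈ Finset.range (n+1), ∑ i ∈ Finset.range (j+1),
        cseq p θ (n-j) * (|ρ|^(j-i) * w i)
      = ∑ i ∈ Finset.Ico 0 (n+1), ∑ j ∈ Finset.Ico i (n+1),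
        cseq p θ (n-j) * (|ρ|^(j-i) * w i) := by
    simp only [Finset.range_eq_Ico]
    exact swap.symm
  rw [e1, ← Finset.range_eq_Ico]
  refine le_of_eq (Finset.sum_congr rfl fun i hi => ?_)
  rw [Finset.mem_range] at hi
  rw [Finset.sum_Ico_eq_sum_range]
  have e2 : ∀ t, cseq p θ (n - (i+t)) * (|ρ|^((i+t)-i) * w i)
      = (cseq p θ ((n-i) - t) * |ρ|^t) * w i := by
    intro t
    have e3 : n - (i+t) = (n-i) - t := by omega
    have e4 : (i+t) - i = t := by omega
    rw [e3, e4]; ring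
  rw [Finset.sum_congr rfl fun t _ => e2 t, ← Finset.sum_mul]
  congr 1
  rw [dseq]
  have : n + 1 - i = (n - i) + 1 := by omega
  rw [this]

lemma sum_pow_bound (p : ℕ) (θ : Fin p → ℝ) (ρ : ℝ) (hθ : ∑ k, |θ k| < 1) (hρ : |ρ| < 1)
    (a : ℝ) (ha : 1 ≤ a) (w : ℕ → ℝ) (hw : ∀ i, 0 ≤ w i) (N : ℕ) :
    ∑ k ∈ Finset.range (N+1),
        (∑ i ∈ Finset.range (k+1), dseq p θ ρ (k-i) * w i) ^ a
      ≤ ((1 / (1 - ∑ k, |θ k|)) * (1 / (1 - |ρ|))) ^ a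
          * ∑ i ∈ Finset.range (N+1), w i ^ a := by
  set D := (1 / (1 - ∑ k, |θ k|)) * (1 / (1 - |ρ|)) with hD
  have hs1 : (0:ℝ) < 1 - ∑ k, |θ k| := by
    have : (0:ℝ) ≤ ∑ k, |θ k| := Finset.sum_nonneg fun k _ => abs_nonneg _
    linarith
  have hr1 : (0:ℝ) < 1 - |ρ| := by linarith
  have hDpos : 0 < D := by rw [hD]; positivity
  have step1 : ∀ k : ℕ, (∑ i ∈ Finset.range (k+1), dseq p θ ρ (k-i) * w i) ^ a
      ≤ D ^ (a-1) * ∑ i ∈ Finset.range (k+1), dseq p θ ρ (k-i) * w i ^ a := by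
    intro k
    exact jensen_step (fun i => dseq p θ ρ (k-i)) w (fun i => dseq_nonneg p θ ρ _) hw
      D a ha hDpos k (dseq_shift_sum_le p θ ρ hθ hρ k)
  refine (Finset.sum_le_sum fun k _ => step1 k).trans ?_
  rw [← Finset.mul_sum]
  have swap := Finset.sum_Ico_Ico_comm 0 (N+1) (fun i k => dseq p θ ρ (k-i) * w i ^ a)
  have e1 : ∑ k ∈ Finset.range (N+1), ∑ i ∈ Finset.range (k+1), dseq p θ ρ (k-i) * w i ^ a
      = ∑ i ∈ Finset.Ico 0 (N+1), ∑ k ∈ Finset.Ico i (N+1), dseq p θ ρ (k-i) * w i ^ a := by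
    simp only [Finset.range_eq_Ico]
    exact swap.symm
  rw [e1]
  have e2 : ∀ i ∈ Finset.Ico 0 (N+1), ∑ k ∈ Finset.Ico i (N+1), dseq p θ ρ (k-i) * w i ^ a
      ≤ D * w i ^ a := by
    intro i _
    rw [Finset.sum_Ico_eq_sum_range, ← Finset.sum_mul]
    refine mul_le_mul_of_nonneg_right ?_ (Real.rpow_nonneg (hw i) a)
    have e3 : ∀ t, dseq p θ ρ (i + t - i) = dseq p θ ρ t := fun t => by congr 1; omega
    rw [Finset.sum_congr rfl fun t _ => e3 t]
    exact dseq_sum_le' p θ ρ hθ hρ _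
  calc D ^ (a-1) * ∑ i ∈ Finset.Ico 0 (N+1), ∑ k ∈ Finset.Ico i (N+1), dseq p θ ρ (k-i) * w i ^ a
      ≤ D ^ (a-1) * ∑ i ∈ Finset.Ico 0 (N+1), D * w i ^ a := by
        refine mul_le_mul_of_nonneg_left (Finset.sum_le_sum e2) (Real.rpow_nonneg hDpos.le _)
    _ = D ^ a * ∑ i ∈ Finset.range (N+1), w i ^ a := by
        rw [← Finset.mul_sum, ← Finset.range_eq_Ico, ← mul_assoc]
        congr 1
        have e5 : D ^ (a-1) * D ^ (1:ℝ) = D ^ a := by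
          rw [← Real.rpow_add hDpos]; norm_num
        rw [Real.rpow_one] at e5
        exact e5



lemma rpow_nat_atTop (a : ℝ) (ha : 1 ≤ a) :
    Tendsto (fun n : ℕ => (n:ℝ) ^ (1/a)) atTop atTop :=
  (tendsto_rpow_atTop (by positivity)).comp tendsto_natCast_atTop_atTop

lemma sup_div_tendsto (a : ℝ) (ha : 1 ≤ a) (u : ℕ → ℝ) (hu : ∀ n, 0 ≤ u n)
    (h : Tendsto (fun n : ℕ => u n / (n:ℝ)^(1/a)) atTop (nhds 0)) :
    Tendsto (fun n : ℕ =>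
      ((Finset.range (n+1)).sup' Finset.nonempty_range_add_one u) / (n:ℝ)^(1/a))
      atTop (nhds 0) := by
  rw [Metric.tendsto_atTop] at h ⊢
  intro ε hε
  obtain ⟨N₁, hN₁⟩ := h (ε/2) (by linarith)
  set K := (Finset.range (N₁+1)).sup' Finset.nonempty_range_add_one u with hK
  have hK0 : 0 ≤ K :=
    le_trans (hu 0) (Finset.le_sup' u (Finset.mem_range.2 (by omega)))
  obtain ⟨N₂, hN₂⟩ := eventually_atTop.1
    ((rpow_nat_atTop a ha).eventually_ge_atTop (2*K/ε))
  refine ⟨max (max N₁ 1) N₂, fun n hn => ?_⟩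
  have hn1 : 1 ≤ n := le_trans (le_trans (le_max_right N₁ 1) (le_max_left _ N₂)) hn
  have hnpos : (0:ℝ) < (n:ℝ)^(1/a) :=
    Real.rpow_pos_of_pos (by exact_mod_cast hn1) _
  have claim : (Finset.range (n+1)).sup' Finset.nonempty_range_add_one u
      ≤ (ε/2) * (n:ℝ)^(1/a) := by
    refine Finset.sup'_le _ _ fun i hi => ?_
    rw [Finset.mem_range] at hi
    by_cases hcase : i ≤ N₁
    · have h1 : u i ≤ K := Finset.le_sup' u (Finset.mem_range.2 (by omega))
      have h2 : 2*K/ε ≤ (n:ℝ)^(1/a) :=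
        hN₂ n (le_trans (le_max_right _ N₂) hn)
      have h3 : 2*K ≤ (n:ℝ)^(1/a) * ε := (div_le_iff₀ hε).1 h2
      linarith
    · push_neg at hcase
      have hi1 : N₁ ≤ i := by omega
      have h4 := hN₁ i hi1
      rw [Real.dist_eq, sub_zero] at h4
      have hipos : (0:ℝ) < (i:ℝ)^(1/a) :=
        Real.rpow_pos_of_pos (by exact_mod_cast (by omega : 1 ≤ i)) _
      have h5 : u i / (i:ℝ)^(1/a) < ε/2 := lt_of_abs_lt h4
      have h6 : u i ≤ (ε/2) * (i:ℝ)^(1/a) := by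
        rw [div_lt_iff₀ hipos] at h5
        linarith
      refine h6.trans (mul_le_mul_of_nonneg_left ?_ (by linarith))
      exact Real.rpow_le_rpow (by positivity) (by exact_mod_cast Nat.lt_succ_iff.1 hi) (by positivity)
  rw [Real.dist_eq, sub_zero]
  have hnn : 0 ≤ (Finset.range (n+1)).sup' Finset.nonempty_range_add_one u / (n:ℝ)^(1/a) := by
    refine div_nonneg ?_ hnpos.le
    exact le_trans (hu 0) (Finset.le_sup' u (Finset.mem_range.2 (by omega)))
  rw [abs_of_nonneg hnn]
  calc (Finset.range (n+1)).sup' Finset.nonempty_range_add_one u / (n:ℝ)^(1/a)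
      ≤ ε/2 := by rw [div_le_iff₀ hnpos]; linarith [claim]
    _ < ε := by linarith

lemma v_small (a : ℝ) (ha : 1 ≤ a) (v : ℕ → ℝ) (m : ℝ)
    (hV : Tendsto (fun n : ℕ => (∑ i ∈ Finset.range n, |v i|^a)/(n:ℝ)) atTop (nhds m)) :
    Tendsto (fun n : ℕ => |v n|^a / (n:ℝ)) atTop (nhds 0) := by
  have h1 : Tendsto (fun n : ℕ => ((n:ℝ)+1)/(n:ℝ)) atTop (nhds 1) := by
    have : ∀ᶠ n : ℕ in atTop, ((n:ℝ)+1)/(n:ℝ) = 1 + 1/(n:ℝ) := by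
      filter_upwards [eventually_ge_atTop 1] with n hn
      have : (n:ℝ) ≠ 0 := by positivity
      field_simp
    rw [tendsto_congr' this]
    have := tendsto_one_div_atTop_nhds_zero_nat (𝕜 := ℝ)
    have h2 := this.const_add (1:ℝ)
    simpa using h2
  have h3 : Tendsto (fun n : ℕ => (∑ i ∈ Finset.range (n+1), |v i|^a)/((n:ℝ)+1))
      atTop (nhds m) := by
    have h := hV.comp (tendsto_add_atTop_nat 1)
    refine h.congr fun n => ?_
    simp only [Function.comp_apply]
    push_cast
    ring
  have h4 : Tendsto (fun n : ℕ => (∑ i ∈ Finset.range (n+1), |v i|^a)/(n:ℝ))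
      atTop (nhds m) := by
    have := h3.mul h1
    rw [mul_one] at this
    refine this.congr' ?_
    filter_upwards [eventually_ge_atTop 1] with n hn
    have hn0 : (n:ℝ) ≠ 0 := by positivity
    have hn1 : (n:ℝ)+1 ≠ 0 := by positivity
    field_simp
  have h5 := h4.sub hV
  rw [sub_self] at h5
  refine h5.congr fun n => ?_
  rw [Finset.sum_range_succ, ← sub_div]
  congr 1
  ring

lemma w_small (a : ℝ) (ha : 1 ≤ a) (w : ℕ → ℝ) (hw : ∀ n, 0 ≤ w n)
    (h : Tendsto (fun n : ℕ => (w n)^a / (n:ℝ)) atTop (nhds 0)) :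
    Tendsto (fun n : ℕ => w n / (n:ℝ)^(1/a)) atTop (nhds 0) := by
  have ha0 : a ≠ 0 := by linarith
  have h1 : Tendsto (fun n : ℕ => ((w n)^a / (n:ℝ))^(1/a)) atTop (nhds 0) := by
    have := h.rpow_const (p := 1/a) (Or.inr (by positivity))
    rwa [Real.zero_rpow (by positivity : 1/a ≠ 0)] at this
  refine h1.congr' ?_
  filter_upwards [eventually_ge_atTop 1] with n hn
  have hn0 : (0:ℝ) ≤ (n:ℝ) := by positivity
  rw [Real.div_rpow (Real.rpow_nonneg (hw n) a) hn0]
  congr 1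
  rw [← Real.rpow_mul (hw n), mul_one_div_cancel ha0, Real.rpow_one]

lemma det_master (p : ℕ) (θ : Fin p → ℝ) (ρ : ℝ) (hθ : ∑ k, |θ k| < 1) (hρ : |ρ| < 1)
    (a : ℝ) (ha : 1 ≤ a) (x e v : ℕ → ℝ) (h0 : x 0 = e 0)
    (hx : ∀ n, 1 ≤ n → x n =
      (∑ k : Fin p, if (k : ℕ) + 1 ≤ n then θ k * x (n - ((k : ℕ) + 1)) else 0) + e n)
    (he : ∀ n, 1 ≤ n → e n = ρ * e (n-1) + v n)
    (m : ℝ)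
    (hV : Tendsto (fun n : ℕ => (∑ i ∈ Finset.range n, |v i|^a)/(n:ℝ)) atTop (nhds m)) :
    (∃ C : ℝ, ∀ n : ℕ, ∑ k ∈ Finset.range (n+1), |x k|^a ≤ C * ((n:ℝ)+1)) ∧
    Tendsto (fun n : ℕ =>
        ((Finset.range (n+1)).sup' Finset.nonempty_range_add_one fun k => |x k|) / (n:ℝ)^(1/a))
      atTop (nhds 0) := by
  have hs1 : (0:ℝ) < 1 - ∑ k, |θ k| := by
    have : (0:ℝ) ≤ ∑ k, |θ k| := Finset.sum_nonneg fun k _ => abs_nonneg _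
    linarith
  have hr1 : (0:ℝ) < 1 - |ρ| := by linarith
  set D := (1/(1 - ∑ k, |θ k|)) * (1/(1 - |ρ|)) with hD
  have hDpos : 0 < D := by rw [hD]; positivity
  set w : ℕ → ℝ := fun i => if i = 0 then |e 0| else |v i| with hw
  have hwnn : ∀ i, 0 ≤ w i := by
    intro i; rw [hw]; dsimp only; split <;> exact abs_nonneg _
  have hxb : ∀ n, |x n| ≤ ∑ i ∈ Finset.range (n+1), dseq p θ ρ (n-i) * w i :=
    xw_bound p θ ρ x e v h0 hx he
  constructor
  · -- Part 1
    obtain ⟨C₀, hC₀⟩ := hV.bddAbove_range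
    set C' := max C₀ 0 with hC'
    have hC'nn : 0 ≤ C' := le_max_right _ _
    have hS : ∀ N : ℕ, ∑ i ∈ Finset.range N, |v i|^a ≤ C' * N := by
      intro N
      match N with
      | 0 => simp
      | (M+1) =>
        have h1 : (∑ i ∈ Finset.range (M+1), |v i|^a)/((M+1:ℕ):ℝ) ≤ C₀ :=
          hC₀ (Set.mem_range_self (M+1))
        have h2 : (0:ℝ) < ((M+1:ℕ):ℝ) := by positivity
        rw [div_le_iff₀ h2] at h1
        calc ∑ i ∈ Finset.range (M+1), |v i|^a ≤ C₀ * ((M+1:ℕ):ℝ) := h1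
          _ ≤ C' * ((M+1:ℕ):ℝ) := mul_le_mul_of_nonneg_right (le_max_left _ _) h2.le
    refine ⟨D^a * (|e 0|^a + C'), fun N => ?_⟩
    have hb1 : ∑ k ∈ Finset.range (N+1), |x k|^a
        ≤ D^a * ∑ i ∈ Finset.range (N+1), w i ^ a := by
      refine le_trans (Finset.sum_le_sum fun k _ =>
        Real.rpow_le_rpow (abs_nonneg _) (hxb k) (by linarith)) ?_
      exact sum_pow_bound p θ ρ hθ hρ a ha w hwnn N
    have hb2 : ∑ i ∈ Finset.range (N+1), w i ^ a
        ≤ |e 0|^a + ∑ i ∈ Finset.range (N+1), |v i|^a := by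
      rw [Finset.sum_range_succ' (fun i => w i ^ a), Finset.sum_range_succ' (fun i => |v i|^a)]
      have e1 : ∀ i, w (i+1) ^ a = |v (i+1)|^a := by
        intro i; rw [hw]; norm_num
      have e2 : w 0 = |e 0| := by simp [hw]
      rw [Finset.sum_congr rfl fun i _ => e1 i, e2]
      have : (0:ℝ) ≤ |v 0|^a := Real.rpow_nonneg (abs_nonneg _) _
      linarith
    have hb3 : ∑ i ∈ Finset.range (N+1), w i ^ a ≤ |e 0|^a + C' * ((N:ℝ)+1) := by
      refine hb2.trans ?_
      have := hS (N+1)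
      push_cast at this ⊢
      linarith
    calc ∑ k ∈ Finset.range (N+1), |x k|^a
        ≤ D^a * (|e 0|^a + C' * ((N:ℝ)+1)) :=
          hb1.trans (mul_le_mul_of_nonneg_left hb3 (Real.rpow_nonneg hDpos.le a))
      _ ≤ D^a * (|e 0|^a + C') * ((N:ℝ)+1) := by
          have h1 : (0:ℝ) ≤ D^a := Real.rpow_nonneg hDpos.le a
          have h2 : (0:ℝ) ≤ |e 0|^a := Real.rpow_nonneg (abs_nonneg _) a
          have h3 : (0:ℝ) ≤ (N:ℝ) := Nat.cast_nonneg N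
          nlinarith [mul_nonneg (mul_nonneg h1 h2) h3]
  · -- Part 2
    have hv0 := v_small a ha v m hV
    have hw0 : Tendsto (fun n : ℕ => (w n)^a / (n:ℝ)) atTop (nhds 0) := by
      refine hv0.congr' ?_
      filter_upwards [eventually_ge_atTop 1] with n hn
      have : w n = |v n| := by rw [hw]; simp only [if_neg (by omega : ¬ n = 0)]
      rw [this]
    have hw1 := w_small a ha w hwnn hw0
    have hsupw := sup_div_tendsto a ha w hwnn hw1
    have hsupx : ∀ n : ℕ, ((Finset.range (n+1)).sup' Finset.nonempty_range_add_one fun k => |x k|)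
        ≤ D * ((Finset.range (n+1)).sup' Finset.nonempty_range_add_one w) := by
      intro n
      set M := (Finset.range (n+1)).sup' Finset.nonempty_range_add_one w with hM
      have hMnn : 0 ≤ M :=
        le_trans (hwnn 0) (Finset.le_sup' w (Finset.mem_range.2 (by omega)))
      refine Finset.sup'_le _ _ fun k hk => ?_
      rw [Finset.mem_range] at hk
      refine (hxb k).trans ?_
      calc ∑ i ∈ Finset.range (k+1), dseq p θ ρ (k-i) * w i
          ≤ ∑ i ∈ Finset.range (k+1), dseq p θ ρ (k-i) * M := by
            refine Finset.sum_le_sum fun i hi => ?_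
            rw [Finset.mem_range] at hi
            refine mul_le_mul_of_nonneg_left ?_ (dseq_nonneg p θ ρ _)
            exact Finset.le_sup' w (Finset.mem_range.2 (by omega))
        _ = (∑ i ∈ Finset.range (k+1), dseq p θ ρ (k-i)) * M := by
            rw [Finset.sum_mul]
        _ ≤ D * M :=
            mul_le_mul_of_nonneg_right (dseq_shift_sum_le p θ ρ hθ hρ k) hMnn
    have hg : Tendsto (fun n : ℕ =>
        D * (((Finset.range (n+1)).sup' Finset.nonempty_range_add_one w) / (n:ℝ)^(1/a)))
        atTop (nhds 0) := by
      have := hsupw.const_mul D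
      rwa [mul_zero] at this
    refine squeeze_zero (fun n => ?_) (fun n => ?_) hg
    · refine div_nonneg ?_ (Real.rpow_nonneg (Nat.cast_nonneg n) _)
      exact le_trans (abs_nonneg (x 0))
        (Finset.le_sup' (fun k => |x k|) (Finset.mem_range.2 (by omega)))
    · rw [mul_div_assoc'] 
      rw [div_eq_mul_inv, div_eq_mul_inv]
      refine mul_le_mul_of_nonneg_right (hsupx n) ?_
      exact inv_nonneg.2 (Real.rpow_nonneg (Nat.cast_nonneg n) _)

/-- for the stable autoregressive process driven by i.i.d. noise with
finite `a`-th moment, a.s. `∑_{k=0}^n |X_k|^a = O(n)` and `sup_{k≤n}|X_k| = o(n^{1/a})`. -/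
theorem stmt11 {Ω : Type*} [MeasurableSpace Ω] (μ : Measure Ω)
    [IsProbabilityMeasure μ]
    (p : ℕ) (hp : 1 ≤ p) (θ : Fin p → ℝ) (ρ : ℝ)
    (hθ : ∑ k, |θ k| < 1) (hρ : |ρ| < 1)
    (a : ℝ) (ha : 1 ≤ a)
    (V X ε : ℕ → Ω → ℝ) (hmeas : ∀ i, Measurable (V i))
    (hindep : iIndepFun V μ)
    (hident : ∀ i, IdentDistrib (V i) (V 0) μ μ)
    (hint : Integrable (fun ω => |V 0 ω| ^ a) μ)
    (hX0 : ∀ ω, X 0 ω = ε 0 ω)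
    (hmem : MemLp (X 0) 2 μ)
    (hX : ∀ ω, ∀ n, 1 ≤ n → X n ω =
      (∑ k : Fin p, if (k : ℕ) + 1 ≤ n then θ k * X (n - ((k : ℕ) + 1)) ω else 0) + ε n ω)
    (hε : ∀ ω, ∀ n, 1 ≤ n → ε n ω = ρ * ε (n - 1) ω + V n ω) :
    ∀ᵐ ω ∂μ,
      (∃ C : ℝ, ∀ n : ℕ,
        ∑ k ∈ Finset.range (n+1), |X k ω| ^ a ≤ C * ((n : ℝ) + 1))
      ∧ Tendsto (fun n : ℕ =>
          ((Finset.range (n+1)).sup' (Finset.nonempty_range_iff.mpr (Nat.succ_ne_zero n)) fun k => |X k ω|)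
            / (n : ℝ) ^ (1 / a))
        atTop (nhds 0) := by
  have hφ : Measurable (fun x : ℝ => |x| ^ a) :=
    ((Real.continuous_rpow_const (by linarith : (0:ℝ) ≤ a)).comp continuous_abs).measurable
  set Y : ℕ → Ω → ℝ := fun i ω => |V i ω| ^ a with hY
  have hYint : Integrable (Y 0) μ := hint
  have hYindep : Pairwise (Function.onFun (IndepFun · · μ) Y) := by
    intro i j hij
    exact (hindep.indepFun hij).comp hφ hφ
  have hYident : ∀ i, IdentDistrib (Y i) (Y 0) μ μ := fun i => (hident i).comp hφ
  have slln := strong_law_ae_real Y hYint hYindep hYident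
  filter_upwards [slln] with ω hω
  exact det_master p θ ρ hθ hρ a ha (fun n => X n ω) (fun n => ε n ω) (fun n => V n ω)
    (hX0 ω) (fun n hn => hX ω n hn) (fun n hn => hε ω n hn) _ hω
end

section
/- For p = 1, with |θ| < 1, |ρ| < 1, the asymptotic variance Σ_θ = α²(1−θρ)² Δ₁^{-1} equals (1−θ²)(1−θρ)(1−ρ²)/(1+θρ)³, where Δ₁ = λ₀ is the first component of the solution Λ of BΛ = e with B the 3×3 matrix with rows (1, −(θ+ρ), θρ), (−(θ+ρ), 1+θρ, 0), (θρ, −(θ+ρ), 1). -/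
open Matrix

/-- for `p = 1`, `Σ_θ = α²(1−θρ)²/λ₀ = (1−θ²)(1−θρ)(1−ρ²)/(1+θρ)³`,
where `λ₀` is the first component of the solution of `BΛ = e`. -/
theorem stmt14 (θ ρ : ℝ) (hθ : |θ| < 1) (hρ : |ρ| < 1)
    (Λ : Fin 3 → ℝ)
    (hΛ : (!![(1 : ℝ), -(θ + ρ), θ * ρ;
              -(θ + ρ), 1 + θ * ρ, 0;
              θ * ρ, -(θ + ρ), 1]) *ᵥ Λ = ![1, 0, 0]) :
    ((1 / ((1 - θ * ρ) * (1 + θ * ρ))) ^ 2 * (1 - θ * ρ) ^ 2) / (Λ 0)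
      = (1 - θ ^ 2) * (1 - θ * ρ) * (1 - ρ ^ 2) / (1 + θ * ρ) ^ 3 := by
  have h0 := congrFun hΛ 0
  have h1 := congrFun hΛ 1
  have h2 := congrFun hΛ 2
  simp [mulVec, dotProduct, Fin.sum_univ_succ] at h0 h1 h2
  have habsθ := abs_lt.mp hθ
  have habsρ := abs_lt.mp hρ
  have hθρ : |θ * ρ| < 1 := by
    rw [abs_mul]
    calc |θ| * |ρ| ≤ 1 * |ρ| := by nlinarith [abs_nonneg θ, abs_nonneg ρ]
    _ < 1 := by nlinarith [abs_nonneg ρ]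
  have hq := abs_lt.mp hθρ
  have h1q : (1 : ℝ) - θ * ρ ≠ 0 := by nlinarith
  have h1q' : (1 : ℝ) + θ * ρ ≠ 0 := by nlinarith
  have hθ2 : (1 : ℝ) - θ ^ 2 ≠ 0 := by nlinarith
  have hρ2 : (1 : ℝ) - ρ ^ 2 ≠ 0 := by nlinarith
  have key : Λ 0 * ((1 - θ * ρ) * (1 - θ ^ 2) * (1 - ρ ^ 2)) = 1 + θ * ρ := by
    linear_combination (1 + θ * ρ) * h0 - θ * ρ * (1 + θ * ρ) * h2 + (θ + ρ) * (1 - θ * ρ) * h1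
  have hΛ0 : Λ 0 ≠ 0 := by
    intro h
    rw [h] at key
    simp at key
    nlinarith
  field_simp
  linear_combination -key
end

section
/- For p = 1 and |θ| < 1, |ρ| < 1, the asymptotic variance of the serial correlation estimator satisfies σ_ρ² = (1−θρ)/(1+θρ)³ · ((θ+ρ)²(1+θρ)² + (θρ)²(1−θ²)(1−ρ²)), obtained from σ_ρ² = P_Lᵀ Δ₁ P_L − 2α^{-1}θ* λ₁ P_L + (α^{-1}θ*)² λ₀ with the explicit p=1 values α = ((1−θρ)(1+θρ))^{-1}, θ* = (θ+ρ)/(1+θρ), Δ₂ = [[λ₀, λ₁],[λ₁, λ₀]], Λ = B^{-1}e as in the p=1 system. -/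
open Matrix

set_option maxHeartbeats 1000000

/-- closed form of the asymptotic variance `σ_ρ²` for `p = 1`. -/
theorem stmt18 (θ ρ : ℝ) (hθ : |θ| < 1) (hρ : |ρ| < 1)
    (Λ : Fin 3 → ℝ)
    (hΛ : (!![(1 : ℝ), -(θ + ρ), θ * ρ;
              -(θ + ρ), 1 + θ * ρ, 0;
              θ * ρ, -(θ + ρ), 1]) *ᵥ Λ = ![1, 0, 0])
    (α θs PL σρ2 : ℝ)
    (hα : α = 1 / ((1 - θ * ρ) * (1 + θ * ρ)))
    (hθs : θs = (θ + ρ) / (1 + θ * ρ))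
    (hPL : PL = (1 - θ * ρ) * (α * θ * ρ / (Λ 0) + θs * (θ + ρ)))
    (hσ : σρ2 = PL ^ 2 * Λ 0 - 2 * α⁻¹ * θs * (Λ 1) * PL + (α⁻¹ * θs) ^ 2 * Λ 0) :
    σρ2 = (1 - θ * ρ) / (1 + θ * ρ) ^ 3
      * ((θ + ρ) ^ 2 * (1 + θ * ρ) ^ 2 + (θ * ρ) ^ 2 * (1 - θ ^ 2) * (1 - ρ ^ 2)) := by
  have ht1 : -1 < θ := (abs_lt.mp hθ).1
  have ht2 : θ < 1 := (abs_lt.mp hθ).2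
  have hr1 : -1 < ρ := (abs_lt.mp hρ).1
  have hr2 : ρ < 1 := (abs_lt.mp hρ).2
  have htr : |θ * ρ| < 1 := by
    rw [abs_mul]
    nlinarith [abs_nonneg θ, abs_nonneg ρ]
  have h1 : (0:ℝ) < 1 + θ * ρ := by linarith [(abs_lt.mp htr).1]
  have h2 : (0:ℝ) < 1 - θ * ρ := by linarith [(abs_lt.mp htr).2]
  have h3 : (0:ℝ) < 1 - θ ^ 2 := by nlinarith
  have h4 : (0:ℝ) < 1 - ρ ^ 2 := by nlinarith
  have e0 : Λ 0 - (θ + ρ) * Λ 1 + θ * ρ * Λ 2 = 1 := by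
    have := congrFun hΛ 0
    simp [Matrix.mulVec, dotProduct, Fin.sum_univ_three] at this
    linarith
  have e1 : -(θ + ρ) * Λ 0 + (1 + θ * ρ) * Λ 1 = 0 := by
    have := congrFun hΛ 1
    simp [Matrix.mulVec, dotProduct, Fin.sum_univ_three] at this
    linarith
  have e2 : θ * ρ * Λ 0 - (θ + ρ) * Λ 1 + Λ 2 = 0 := by
    have := congrFun hΛ 2
    simp [Matrix.mulVec, dotProduct, Fin.sum_univ_three] at this
    linarith
  set D : ℝ := (1 - θ * ρ) * (1 - θ ^ 2) * (1 - ρ ^ 2) with hD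
  have hDpos : 0 < D := by positivity
  have hL0 : Λ 0 * D = 1 + θ * ρ := by
    linear_combination (1 + θ * ρ) * e0 + (θ + ρ) * (1 - θ * ρ) * e1
      - θ * ρ * (1 + θ * ρ) * e2
  have hDne : D ≠ 0 := ne_of_gt hDpos
  have hL0v : Λ 0 = (1 + θ * ρ) / D := (eq_div_iff hDne).mpr hL0
  have hAux : Λ 1 * D * (1 + θ * ρ) = (θ + ρ) * (1 + θ * ρ) := by
    linear_combination D * e1 + (θ + ρ) * hL0
  have hL1 : Λ 1 = (θ + ρ) / D :=
    (eq_div_iff hDne).mpr (mul_right_cancel₀ (ne_of_gt h1) hAux)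
  have hL0ne : Λ 0 ≠ 0 := by
    rw [hL0v]; positivity
  rw [hσ, hPL, hα, hθs, hL0v, hL1]
  field_simp
  ring
end
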